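/- Let G = GL_{2m}(ℂ) with m odd, t = diag((+1)^m, (−1)^m) ∈ G, and let λ = (λ_1,…,λ_1, λ_{m+1},…,λ_{m+1}) be a dominant weight with the first m entries equal to λ_1 and the last m entries equal to λ_{m+1}, where λ_1 ≥ λ_{m+1} and λ_1, λ_{m+1} have opposite parity. Then the character of the irreducible representation V(λ) of GL_{2m}(ℂ) vanishes at t: ch(t, V(λ)) = 0. -/

import Mathlib

open Matrix

/-- The diagonal element of `GL_N(ℂ)` with given unit entries. -/
def diagUnits (N : ℕ) (d : Fin N → ℂˣ) : GL (Fin N) ℂ :=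
  ⟨Matrix.diagonal (fun i => (d i : ℂ)),
   Matrix.diagonal (fun i => ((d i)⁻¹ : ℂˣ)),
   by
     rw [Matrix.diagonal_mul_diagonal]
     simp,
   by
     rw [Matrix.diagonal_mul_diagonal]
     simp⟩

lemma diagUnits_coe (N : ℕ) (d : Fin N → ℂˣ) :
    ((diagUnits N d : GL (Fin N) ℂ) : Matrix (Fin N) (Fin N) ℂ)
      = Matrix.diagonal (fun i => (d i : ℂ)) := rfl

/-- **Example 3.2.**  Let `G = GL_{2m}(ℂ)` with `m` odd,
`t = diag((+1)^m, (−1)^m)`, and let `λ = (λ₁,…,λ₁,λ_{m+1},…,λ_{m+1})` be a dominant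
weight with first `m` entries `λ₁` and last `m` entries `λ_{m+1}`, where `λ₁ ≥ λ_{m+1}`
and `λ₁ − λ_{m+1}` is odd.  Then `ch(t, V(λ)) = 0`, for `V(λ)` the irreducible
representation of highest weight `λ` (modelled as an irreducible finite-dimensional
representation with a highest weight vector `w`, i.e. an eigenvector of the Borel of
upper triangular matrices with eigencharacter `g ↦ ∏ᵢ gᵢᵢ^{λᵢ}`). -/
theorem character_vanishes_GL2m
    (m : ℕ) (hm : Odd m) (hm0 : 0 < m)
    (l1 l2 : ℤ) (hdom : l2 ≤ l1) (hpar : Odd (l1 - l2))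
    (V : Type) [AddCommGroup V] [Module ℂ V] [FiniteDimensional ℂ V]
    (π : Representation ℂ (GL (Fin (2 * m)) ℂ) V)
    (hirr : ∀ U : Submodule ℂ V,
      (∀ g : GL (Fin (2 * m)) ℂ, ∀ x ∈ U, π g x ∈ U) → U = ⊥ ∨ U = ⊤)
    (w : V) (hw0 : w ≠ 0)
    (hhw : ∀ g : GL (Fin (2 * m)) ℂ,
      (∀ i j : Fin (2 * m), (j : ℕ) < (i : ℕ) → (g : Matrix (Fin (2 * m)) (Fin (2 * m)) ℂ) i j = 0) →
      π g w = (∏ i : Fin (2 * m),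
        ((g : Matrix (Fin (2 * m)) (Fin (2 * m)) ℂ) i i) ^
          (if (i : ℕ) < m then l1 else l2)) • w) :
    LinearMap.trace ℂ V
      (π (diagUnits (2 * m) (fun i => if (i : ℕ) < m then 1 else -1))) = 0 := by
  haveI : NeZero (2 * m) := ⟨by omega⟩
  set d : Fin (2 * m) → ℂˣ := fun i => if (i : ℕ) < m then 1 else -1 with hd
  set t : GL (Fin (2 * m)) ℂ := diagUnits (2 * m) d with ht
  set c : GL (Fin (2 * m)) ℂ := diagUnits (2 * m) (fun _ => -1) with hc
  -- c is central
  have hcentral : ∀ g : GL (Fin (2 * m)) ℂ, c * g = g * c := by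
    intro g
    apply Units.ext
    rw [Units.val_mul, Units.val_mul, hc, diagUnits_coe]
    ext i j
    rw [Matrix.diagonal_mul, Matrix.mul_diagonal]
    ring
  -- parity computation
  have hodd12 : Odd (l1 + l2) := by
    rcases hpar with ⟨k, hk⟩
    exact ⟨k + l2, by linarith⟩
  have hprod : (∏ i : Fin (2 * m), (-1 : ℂ) ^ (if (i : ℕ) < m then l1 else l2)) = -1 := by
    have h2 : m + m = 2 * m := (two_mul m).symm
    have heq := Fintype.prod_equiv ((finSumFinEquiv (m := m) (n := m)).trans (finCongr h2))
      (fun x : Fin m ⊕ Fin m =>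
        (-1 : ℂ) ^ (if ((((finSumFinEquiv (m := m) (n := m)).trans (finCongr h2)) x : Fin (2 * m)) : ℕ) < m then l1 else l2))
      (fun i : Fin (2 * m) => (-1 : ℂ) ^ (if (i : ℕ) < m then l1 else l2))
      (fun x => rfl)
    rw [← heq, Fintype.prod_sum_type]
    have hl : ∀ i : Fin m,
        (-1 : ℂ) ^ (if ((((finSumFinEquiv (m := m) (n := m)).trans (finCongr h2)) (Sum.inl i) : Fin (2 * m)) : ℕ) < m then l1 else l2)
        = (-1 : ℂ) ^ l1 := by
      intro i
      have hv : ((((finSumFinEquiv (m := m) (n := m)).trans (finCongr h2)) (Sum.inl i) : Fin (2 * m)) : ℕ) = (i : ℕ) := by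
        simp
      rw [hv, if_pos i.isLt]
    have hr : ∀ i : Fin m,
        (-1 : ℂ) ^ (if ((((finSumFinEquiv (m := m) (n := m)).trans (finCongr h2)) (Sum.inr i) : Fin (2 * m)) : ℕ) < m then l1 else l2)
        = (-1 : ℂ) ^ l2 := by
      intro i
      have hv : ((((finSumFinEquiv (m := m) (n := m)).trans (finCongr h2)) (Sum.inr i) : Fin (2 * m)) : ℕ) = m + (i : ℕ) := by
        simp
        omega
      rw [hv, if_neg (by omega)]
    rw [Finset.prod_congr rfl (fun i _ => hl i), Finset.prod_congr rfl (fun i _ => hr i),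
      Finset.prod_const, Finset.prod_const]
    simp only [Finset.card_univ, Fintype.card_fin]
    rw [← mul_pow, ← zpow_add₀ (by norm_num : (-1 : ℂ) ≠ 0), hodd12.neg_one_zpow]
    exact hm.neg_one_pow
  -- π c w = -w
  have hcw : π c w = -w := by
    have htri : ∀ i j : Fin (2 * m), (j : ℕ) < (i : ℕ) →
        ((c : GL (Fin (2 * m)) ℂ) : Matrix (Fin (2 * m)) (Fin (2 * m)) ℂ) i j = 0 := by
      intro i j hij
      show Matrix.diagonal (fun _ => ((-1 : ℂˣ) : ℂ)) i j = 0
      exact Matrix.diagonal_apply_ne _ (by intro h; subst h; omega)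
    have h := hhw c htri
    have hdiagc : ∀ i : Fin (2 * m),
        ((c : GL (Fin (2 * m)) ℂ) : Matrix (Fin (2 * m)) (Fin (2 * m)) ℂ) i i = -1 := by
      intro i
      show Matrix.diagonal (fun _ => ((-1 : ℂˣ) : ℂ)) i i = -1
      simp
    rw [Finset.prod_congr rfl (fun i _ => by rw [hdiagc i])] at h
    rw [h, hprod, neg_smul, one_smul]
  -- Schur: π c = -1 on all of V
  have hcall : ∀ v : V, π c v = -v := by
    set U : Submodule ℂ V := LinearMap.ker (π c + LinearMap.id) with hU
    have hmem : ∀ x : V, x ∈ U ↔ π c x = -x := by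
      intro x
      rw [hU, LinearMap.mem_ker]
      simp only [LinearMap.add_apply, LinearMap.id_apply]
      constructor
      · intro h; exact eq_neg_of_add_eq_zero_left h
      · intro h; rw [h]; exact neg_add_cancel x
    have hinv : ∀ g : GL (Fin (2 * m)) ℂ, ∀ x ∈ U, π g x ∈ U := by
      intro g x hx
      rw [hmem] at hx ⊢
      have : π c (π g x) = π g (π c x) := by
        have h1 : π c * π g = π g * π c := by
          rw [← _root_.map_mul, ← _root_.map_mul, hcentral g]
        calc π c (π g x) = (π c * π g) x := rfl
          _ = (π g * π c) x := by rw [h1]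
          _ = π g (π c x) := rfl
      rw [this, hx, map_neg]
    rcases hirr U hinv with hbot | htop
    · exfalso
      apply hw0
      have : w ∈ U := (hmem w).mpr hcw
      rw [hbot] at this
      exact this
    · intro v
      exact (hmem v).mp (htop ▸ Submodule.mem_top)
  -- trace of π (c * t) = - trace of π t
  have hct : π (c * t) = -(π t) := by
    ext v
    have : π (c * t) v = π c (π t v) := by rw [_root_.map_mul]; rfl
    rw [this, hcall]
    rfl
  -- permutation conjugating t into c * t
  set σ : Equiv.Perm (Fin (2 * m)) := Equiv.addRight (⟨m, by omega⟩ : Fin (2 * m)) with hσ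
  have hσval : ∀ j : Fin (2 * m), ((σ j : Fin (2 * m)) : ℕ) = ((j : ℕ) + m) % (2 * m) := by
    intro j
    simp [hσ, Fin.add_def]
  have hdσ : ∀ j : Fin (2 * m), ((d (σ j) : ℂ)) = -((d j : ℂ)) := by
    intro j
    by_cases hj : (j : ℕ) < m
    · have h1 : ¬ (((σ j : Fin (2 * m)) : ℕ) < m) := by
        rw [hσval j, Nat.mod_eq_of_lt (by omega)]; omega
      simp [hd, hj, h1]
    · have hjlt := j.isLt
      have h1 : (((σ j : Fin (2 * m)) : ℕ) < m) := by
        rw [hσval j]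
        have : ((j : ℕ) + m) % (2 * m) = (j : ℕ) + m - 2 * m := by
          rw [Nat.mod_eq_sub_mod (by omega), Nat.mod_eq_of_lt (by omega)]
        omega
      simp [hd, hj, h1]
  -- the permutation GL element
  set P : Matrix (Fin (2 * m)) (Fin (2 * m)) ℂ := σ.toPEquiv.toMatrix with hP
  set Q : Matrix (Fin (2 * m)) (Fin (2 * m)) ℂ := σ.symm.toPEquiv.toMatrix with hQ
  have hPQ : P * Q = 1 := by
    rw [hP, hQ, ← PEquiv.toMatrix_trans, ← Equiv.toPEquiv_trans]
    simp [PEquiv.toMatrix_refl]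
  have hQP : Q * P = 1 := by
    rw [hP, hQ, ← PEquiv.toMatrix_trans, ← Equiv.toPEquiv_trans]
    simp [PEquiv.toMatrix_refl]
  set p : GL (Fin (2 * m)) ℂ := ⟨P, Q, hPQ, hQP⟩ with hp
  -- key conjugation identity: p * t = (c * t) * p
  have hconj : p * t = (c * t) * p := by
    apply Units.ext
    show P * Matrix.diagonal (fun i => (d i : ℂ))
        = (Matrix.diagonal (fun _ => ((-1 : ℂˣ) : ℂ)) * Matrix.diagonal (fun i => (d i : ℂ))) * P
    rw [Matrix.diagonal_mul_diagonal, hP, PEquiv.toMatrix_toPEquiv_mul]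
    ext i j
    have hPe : ∀ a b : Fin (2 * m), σ.toPEquiv.toMatrix a b
        = (1 : Matrix (Fin (2 * m)) (Fin (2 * m)) ℂ) (σ a) b := fun a b => by
      rw [PEquiv.toMatrix_toPEquiv_apply, Pi.single_apply, Matrix.one_apply]
      simp only [eq_comm]
    rw [Matrix.submatrix_apply, Matrix.diagonal_mul, hPe, id_eq]
    by_cases hij : σ i = j
    · subst hij
      rw [Matrix.diagonal_apply_eq, Matrix.one_apply_eq, mul_one, hdσ i]
      simp
    · rw [Matrix.diagonal_apply_ne _ hij, Matrix.one_apply_ne hij, mul_zero]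
  -- conclude via trace
  have hmulinv : π p⁻¹ * π p = 1 := by rw [← _root_.map_mul]; simp
  have hmulinv' : π p * π p⁻¹ = 1 := by rw [← _root_.map_mul]; simp
  have htr : LinearMap.trace ℂ V (π t) = - LinearMap.trace ℂ V (π t) := by
    calc LinearMap.trace ℂ V (π t)
        = LinearMap.trace ℂ V ((π p⁻¹ * π p) * π t) := by rw [hmulinv, one_mul]
      _ = LinearMap.trace ℂ V (π p⁻¹ * (π p * π t)) := by rw [mul_assoc]
      _ = LinearMap.trace ℂ V (π p⁻¹ * (π (c * t) * π p)) := by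
            have hstep : π p * π t = π (c * t) * π p := by
              rw [← _root_.map_mul π p t, hconj, _root_.map_mul]
            rw [hstep]
      _ = LinearMap.trace ℂ V ((π p⁻¹ * π (c * t)) * π p) := by rw [mul_assoc]
      _ = LinearMap.trace ℂ V (π p * (π p⁻¹ * π (c * t))) := (LinearMap.trace_mul_comm ℂ _ _).symm
      _ = LinearMap.trace ℂ V ((π p * π p⁻¹) * π (c * t)) := by rw [mul_assoc]
      _ = LinearMap.trace ℂ V (π (c * t)) := by rw [hmulinv', one_mul]
      _ = LinearMap.trace ℂ V (-(π t)) := by rw [hct]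
      _ = - LinearMap.trace ℂ V (π t) := map_neg _ _
  have h2 : LinearMap.trace ℂ V (π t) + LinearMap.trace ℂ V (π t) = 0 := by
    nth_rewrite 2 [htr]
    exact add_neg_cancel _
  exact add_self_eq_zero.mp h2
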